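/- (Some/any property of fresh atoms) If ⟨s, S, fresh()⟩↓ⁿ⁺¹ with atom(S) ⊆ atom(s), then for ALL a' ∉ atom(s), ⟨s⊕a', S, a'⟩↓ⁿ. Similarly, if ⟨s, S, unbind ⟨⟨a⟩⟩v⟩↓ⁿ⁺¹ with atom(S) ∪ atom(a,v) ⊆ atom(s), then for ALL a' ∉ atom(s), ⟨s⊕a', S, (a', v[a:=a'])⟩↓ⁿ. -/

import Mathlib

set_option autoImplicit true

/-! ## Atoms and variables -/

abbrev Atom : Type := ℕ

/-! ## Types over a set of data type symbols -/

inductive Ty (D : Type) : Type where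
  | unit : Ty D
  | prod : Ty D → Ty D → Ty D
  | arrow : Ty D → Ty D → Ty D
  | data : D → Ty D
  | atm : Ty D
  | bnd : Ty D → Ty D

/-! ## Signatures: data types, constructors and observations -/

structure Sig : Type 1 where
  D : Type
  C : Type
  O : Type
  [finD : Fintype D]
  [finC : Fintype C]
  [finO : Fintype O]
  natD : D
  argTy : C → Ty D
  resTy : C → D
  zeroC : C
  succC : C
  zeroArg : argTy zeroC = Ty.unit
  zeroRes : resTy zeroC = natD
  succArg : argTy succC = Ty.data natD
  succRes : resTy succC = natD
  arity : O → ℕ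
  obsVal : O → List Atom → List Atom → ℕ
  eqO : O
  eqArity : arity eqO = 2
  eqSem : ∀ (s : List Atom) (a b : Atom),
    obsVal eqO s [a, b] = if a = b then 0 else 1

attribute [instance] Sig.finD Sig.finC Sig.finO

/-! ## Terms (de Bruijn representation; values are a sub-grammar cut out by `IsVal`) -/

inductive Tm (σ : Sig) : Type where
  | var : ℕ → Tm σ
  | unit : Tm σ
  | pair : Tm σ → Tm σ → Tm σ
  | fn : Tm σ → Tm σ          -- fun(f x = e); de Bruijn: var 0 = x, var 1 = f
  | con : σ.C → Tm σ → Tm σ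
  | atom : Atom → Tm σ
  | bindv : Tm σ → Tm σ → Tm σ -- atom binding ⟨⟨v₁⟩⟩v₂
  | lett : Tm σ → Tm σ → Tm σ  -- let x = e₁ in e₂; binds var 0 in e₂
  | fst : Tm σ → Tm σ
  | snd : Tm σ → Tm σ
  | app : Tm σ → Tm σ → Tm σ
  | case : Tm σ → (σ.C → Tm σ) → Tm σ -- match; each branch binds var 0
  | fresh : Tm σ
  | unbind : Tm σ → Tm σ
  | obs : (o : σ.O) → (Fin (σ.arity o) → Tm σ) → Tm σ

inductive IsVal {σ : Sig} : Tm σ → Prop where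
  | var : IsVal (Tm.var n)
  | unit : IsVal Tm.unit
  | pair : IsVal v₁ → IsVal v₂ → IsVal (Tm.pair v₁ v₂)
  | fn : IsVal (Tm.fn e)
  | con : IsVal v → IsVal (Tm.con c v)
  | atom : IsVal (Tm.atom a)
  | bindv : IsVal v₁ → IsVal v₂ → IsVal (Tm.bindv v₁ v₂)

/-! ## Renaming and substitution of variables -/

def upr (r : ℕ → ℕ) : ℕ → ℕ
  | 0 => 0
  | n + 1 => r n + 1

namespace Tm

variable {σ : Sig}

def renV : Tm σ → (ℕ → ℕ) → Tm σ
  | .var n, r => .var (r n)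
  | .unit, _ => .unit
  | .pair t₁ t₂, r => .pair (renV t₁ r) (renV t₂ r)
  | .fn e, r => .fn (renV e (upr (upr r)))
  | .con c t, r => .con c (renV t r)
  | .atom a, _ => .atom a
  | .bindv t₁ t₂, r => .bindv (renV t₁ r) (renV t₂ r)
  | .lett e₁ e₂, r => .lett (renV e₁ r) (renV e₂ (upr r))
  | .fst t, r => .fst (renV t r)
  | .snd t, r => .snd (renV t r)
  | .app t₁ t₂, r => .app (renV t₁ r) (renV t₂ r)
  | .case t br, r => .case (renV t r) (fun c => renV (br c) (upr r))
  | .fresh, _ => .fresh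
  | .unbind t, r => .unbind (renV t r)
  | .obs o args, r => .obs o (fun i => renV (args i) r)

def ups (ρ : ℕ → Tm σ) : ℕ → Tm σ
  | 0 => .var 0
  | n + 1 => renV (ρ n) Nat.succ

def subst : Tm σ → (ℕ → Tm σ) → Tm σ
  | .var n, ρ => ρ n
  | .unit, _ => .unit
  | .pair t₁ t₂, ρ => .pair (subst t₁ ρ) (subst t₂ ρ)
  | .fn e, ρ => .fn (subst e (ups (ups ρ)))
  | .con c t, ρ => .con c (subst t ρ)
  | .atom a, _ => .atom a
  | .bindv t₁ t₂, ρ => .bindv (subst t₁ ρ) (subst t₂ ρ)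
  | .lett e₁ e₂, ρ => .lett (subst e₁ ρ) (subst e₂ (ups ρ))
  | .fst t, ρ => .fst (subst t ρ)
  | .snd t, ρ => .snd (subst t ρ)
  | .app t₁ t₂, ρ => .app (subst t₁ ρ) (subst t₂ ρ)
  | .case t br, ρ => .case (subst t ρ) (fun c => subst (br c) (ups ρ))
  | .fresh, _ => .fresh
  | .unbind t, ρ => .unbind (subst t ρ)
  | .obs o args, ρ => .obs o (fun i => subst (args i) ρ)

/-- The substitution [v/x₀]. -/
def cons1 (v : Tm σ) : ℕ → Tm σ
  | 0 => v
  | n + 1 => .var n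

/-- The substitution [v/x₀, f/x₁]. -/
def cons2 (v f : Tm σ) : ℕ → Tm σ
  | 0 => v
  | 1 => f
  | n + 2 => .var n

/-- e[v/x] (single capture-avoiding substitution for the last-bound variable). -/
def subst1 (e v : Tm σ) : Tm σ := subst e (cons1 v)

/-- e[v/x, f/f'] (used for function application). -/
def subst2 (e v f : Tm σ) : Tm σ := subst e (cons2 v f)

/-! ## Atoms of a term, renaming/permuting atoms, observation symbols -/

def atoms : Tm σ → Finset Atom
  | .var _ => ∅
  | .unit => ∅
  | .pair t₁ t₂ => atoms t₁ ∪ atoms t₂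
  | .fn e => atoms e
  | .con _ t => atoms t
  | .atom a => {a}
  | .bindv t₁ t₂ => atoms t₁ ∪ atoms t₂
  | .lett e₁ e₂ => atoms e₁ ∪ atoms e₂
  | .fst t => atoms t
  | .snd t => atoms t
  | .app t₁ t₂ => atoms t₁ ∪ atoms t₂
  | .case t br => atoms t ∪ Finset.univ.biUnion (fun c => atoms (br c))
  | .fresh => ∅
  | .unbind t => atoms t
  | .obs _ args => Finset.univ.biUnion (fun i => atoms (args i))

def mapAtoms : Tm σ → (Atom → Atom) → Tm σ
  | .var n, _ => .var n
  | .unit, _ => .unit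
  | .pair t₁ t₂, f => .pair (mapAtoms t₁ f) (mapAtoms t₂ f)
  | .fn e, f => .fn (mapAtoms e f)
  | .con c t, f => .con c (mapAtoms t f)
  | .atom a, f => .atom (f a)
  | .bindv t₁ t₂, f => .bindv (mapAtoms t₁ f) (mapAtoms t₂ f)
  | .lett e₁ e₂, f => .lett (mapAtoms e₁ f) (mapAtoms e₂ f)
  | .fst t, f => .fst (mapAtoms t f)
  | .snd t, f => .snd (mapAtoms t f)
  | .app t₁ t₂, f => .app (mapAtoms t₁ f) (mapAtoms t₂ f)
  | .case t br, f => .case (mapAtoms t f) (fun c => mapAtoms (br c) f)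
  | .fresh, _ => .fresh
  | .unbind t, f => .unbind (mapAtoms t f)
  | .obs o args, f => .obs o (fun i => mapAtoms (args i) f)

/-- v[a := a'] : rename all occurrences of atom a to a'. -/
def renameAtom (t : Tm σ) (a a' : Atom) : Tm σ :=
  t.mapAtoms (fun b => if b = a then a' else b)

def obsSyms : Tm σ → Set σ.O
  | .var _ => ∅
  | .unit => ∅
  | .pair t₁ t₂ => obsSyms t₁ ∪ obsSyms t₂
  | .fn e => obsSyms e
  | .con _ t => obsSyms t
  | .atom _ => ∅
  | .bindv t₁ t₂ => obsSyms t₁ ∪ obsSyms t₂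
  | .lett e₁ e₂ => obsSyms e₁ ∪ obsSyms e₂
  | .fst t => obsSyms t
  | .snd t => obsSyms t
  | .app t₁ t₂ => obsSyms t₁ ∪ obsSyms t₂
  | .case t br => obsSyms t ∪ ⋃ c, obsSyms (br c)
  | .fresh => ∅
  | .unbind t => obsSyms t
  | .obs o args => insert o (⋃ i, obsSyms (args i))

end Tm

/-! ## Frame stacks -/

inductive Stk (σ : Sig) : Type where
  | id : Stk σ
  | cons : Stk σ → Tm σ → Stk σ  -- S∘(x.e); e binds var 0

namespace Stk

variable {σ : Sig}

def atoms : Stk σ → Finset Atom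
  | .id => ∅
  | .cons S e => atoms S ∪ e.atoms

def obsSyms : Stk σ → Set σ.O
  | .id => ∅
  | .cons S e => obsSyms S ∪ e.obsSyms

def mapAtoms : Stk σ → (Atom → Atom) → Stk σ
  | .id, _ => .id
  | .cons S e, f => .cons (mapAtoms S f) (e.mapAtoms f)

/-- S[e]: Id[e] = e, (S∘(x.e'))[e] = S[let x = e in e']. -/
def fill : Stk σ → Tm σ → Tm σ
  | .id, e => e
  | .cons S e', e => fill S (Tm.lett e e')

end Stk

/-! ## Numerals -/

def numeral (σ : Sig) : ℕ → Tm σ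
  | 0 => Tm.con σ.zeroC Tm.unit
  | n + 1 => Tm.con σ.succC (numeral σ n)

/-! ## Configurations -/

structure Config (σ : Sig) : Type where
  st : List Atom
  stk : Stk σ
  tm : Tm σ

/-! ## Typing -/

inductive HasTy (σ : Sig) : List (Ty σ.D) → Tm σ → Ty σ.D → Prop where
  | var (Γ : List (Ty σ.D)) (n : ℕ) (τ : Ty σ.D) :
      Γ[n]? = some τ → HasTy σ Γ (Tm.var n) τ
  | unit : HasTy σ Γ Tm.unit Ty.unit
  | pair : IsVal v₁ → IsVal v₂ → HasTy σ Γ v₁ τ₁ → HasTy σ Γ v₂ τ₂ →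
      HasTy σ Γ (Tm.pair v₁ v₂) (Ty.prod τ₁ τ₂)
  | fn : HasTy σ (τ :: Ty.arrow τ τ' :: Γ) e τ' →
      HasTy σ Γ (Tm.fn e) (Ty.arrow τ τ')
  | con : IsVal v → HasTy σ Γ v (σ.argTy c) →
      HasTy σ Γ (Tm.con c v) (Ty.data (σ.resTy c))
  | atom : HasTy σ Γ (Tm.atom a) Ty.atm
  | bindv : IsVal v₁ → IsVal v₂ → HasTy σ Γ v₁ Ty.atm → HasTy σ Γ v₂ τ →
      HasTy σ Γ (Tm.bindv v₁ v₂) (Ty.bnd τ)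
  | lett : HasTy σ Γ e₁ τ → HasTy σ (τ :: Γ) e₂ τ' →
      HasTy σ Γ (Tm.lett e₁ e₂) τ'
  | fst : IsVal v → HasTy σ Γ v (Ty.prod τ₁ τ₂) → HasTy σ Γ (Tm.fst v) τ₁
  | snd : IsVal v → HasTy σ Γ v (Ty.prod τ₁ τ₂) → HasTy σ Γ (Tm.snd v) τ₂
  | app : IsVal v₁ → IsVal v₂ → HasTy σ Γ v₁ (Ty.arrow τ τ') → HasTy σ Γ v₂ τ →
      HasTy σ Γ (Tm.app v₁ v₂) τ'
  | case (br : σ.C → Tm σ) : IsVal v → HasTy σ Γ v (Ty.data δ) →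
      (∀ c, σ.resTy c = δ → HasTy σ (σ.argTy c :: Γ) (br c) τ) →
      HasTy σ Γ (Tm.case v br) τ
  | fresh : HasTy σ Γ Tm.fresh Ty.atm
  | unbind : IsVal v → HasTy σ Γ v (Ty.bnd τ) →
      HasTy σ Γ (Tm.unbind v) (Ty.prod Ty.atm τ)
  | obs (o : σ.O) (args : Fin (σ.arity o) → Tm σ) :
      (∀ i, IsVal (args i)) → (∀ i, HasTy σ Γ (args i) Ty.atm) →
      HasTy σ Γ (Tm.obs o args) (Ty.data σ.natD)

inductive HasTyStk (σ : Sig) : List (Ty σ.D) → Stk σ → Ty σ.D → Ty σ.D → Prop where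
  | id : HasTyStk σ Γ Stk.id τ τ
  | cons : HasTy σ (τ :: Γ) e τ' → HasTyStk σ Γ S τ' τ'' →
      HasTyStk σ Γ (Stk.cons S e) τ τ''

/-! ## The transition relation -/

inductive Step (σ : Sig) : Config σ → Config σ → Prop where
  | pop : IsVal v →
      Step σ ⟨s, Stk.cons S e, v⟩ ⟨s, S, e.subst1 v⟩
  | lett :
      Step σ ⟨s, S, Tm.lett e₁ e₂⟩ ⟨s, Stk.cons S e₂, e₁⟩
  | case (br : σ.C → Tm σ) : IsVal v →
      Step σ ⟨s, S, Tm.case (Tm.con c v) br⟩ ⟨s, S, (br c).subst1 v⟩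
  | fst : IsVal v₁ → IsVal v₂ →
      Step σ ⟨s, S, Tm.fst (Tm.pair v₁ v₂)⟩ ⟨s, S, v₁⟩
  | snd : IsVal v₁ → IsVal v₂ →
      Step σ ⟨s, S, Tm.snd (Tm.pair v₁ v₂)⟩ ⟨s, S, v₂⟩
  | app : IsVal v →
      Step σ ⟨s, S, Tm.app (Tm.fn e) v⟩ ⟨s, S, e.subst2 v (Tm.fn e)⟩
  | fresh : a' ∉ s →
      Step σ ⟨s, S, Tm.fresh⟩ ⟨s ++ [a'], S, Tm.atom a'⟩
  | unbind : a' ∉ s → IsVal v →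
      Step σ ⟨s, S, Tm.unbind (Tm.bindv (Tm.atom a) v)⟩
             ⟨s ++ [a'], S, Tm.pair (Tm.atom a') (v.renameAtom a a')⟩
  | obs (o : σ.O) (as : Fin (σ.arity o) → Atom) :
      (∀ i, as i ∈ s) →
      Step σ ⟨s, S, Tm.obs o (fun i => Tm.atom (as i))⟩
             ⟨s, S, numeral σ (σ.obsVal o s (List.ofFn as))⟩

/-! ## Termination -/

inductive TermN (σ : Sig) : Config σ → ℕ → Prop where
  | val : IsVal v → TermN σ ⟨s, Stk.id, v⟩ 0
  | step : Step σ c c' → TermN σ c' n → TermN σ c (n + 1)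

def Term (σ : Sig) (c : Config σ) : Prop := ∃ n, TermN σ c n

/-! ## Equivariance and affineness of observations -/

def ObsEquivariant (σ : Sig) : Prop :=
  ∀ (π : Equiv.Perm Atom), {a : Atom | π a ≠ a}.Finite →
    ∀ (o : σ.O) (s as : List Atom),
      s.Nodup → as.length = σ.arity o → (∀ a ∈ as, a ∈ s) →
      σ.obsVal o s as = σ.obsVal o (s.map ⇑π) (as.map ⇑π)

def AffineObs (σ : Sig) (o : σ.O) : Prop :=
  ∀ (s : List Atom) (a' : Atom) (as : List Atom),
    s.Nodup → a' ∉ s → as.length = σ.arity o → (∀ a ∈ as, a ∈ s) →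
    σ.obsVal o (a' :: s) as = σ.obsVal o s as

/-! ## Operational equivalence of closed expressions, and contextual equivalence -/

def OpEq (σ : Sig) (w : Finset Atom) (e e' : Tm σ) (τ : Ty σ.D) : Prop :=
  e.atoms ∪ e'.atoms ⊆ w ∧ HasTy σ [] e τ ∧ HasTy σ [] e' τ ∧
  ∀ (s : List Atom) (S : Stk σ) (τ' : Ty σ.D),
    s.Nodup → w ∪ S.atoms ⊆ s.toFinset → HasTyStk σ [] S τ τ' →
    (Term σ ⟨s, S, e⟩ ↔ Term σ ⟨s, S, e'⟩)

/-- A closing substitution for context Γ with atoms in w. -/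
def ClosingSubst (σ : Sig) (Γ : List (Ty σ.D)) (w : Finset Atom) (vs : ℕ → Tm σ) : Prop :=
  ∀ i τ, Γ[i]? = some τ → IsVal (vs i) ∧ HasTy σ [] (vs i) τ ∧ (vs i).atoms ⊆ w

def CtxEq (σ : Sig) (Γ : List (Ty σ.D)) (w : Finset Atom) (e e' : Tm σ) (τ : Ty σ.D) : Prop :=
  e.atoms ∪ e'.atoms ⊆ w ∧ HasTy σ Γ e τ ∧ HasTy σ Γ e' τ ∧
  ∀ (w' : Finset Atom) (vs : ℕ → Tm σ), w ⊆ w' → ClosingSubst σ Γ w' vs →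
    OpEq σ w' (e.subst vs) (e'.subst vs) τ

/-! ## Expression relations -/

def ExprRel (σ : Sig) : Type :=
  List (Ty σ.D) → Finset Atom → Tm σ → Tm σ → Ty σ.D → Prop

def IsExprRel (σ : Sig) (R : ExprRel σ) : Prop :=
  ∀ Γ w e e' τ, R Γ w e e' τ →
    e.atoms ∪ e'.atoms ⊆ w ∧ HasTy σ Γ e τ ∧ HasTy σ Γ e' τ

/-- Compatible refinement ℰ̂ of an expression relation ℰ. -/
inductive CompRef (σ : Sig) (R : ExprRel σ) :
    List (Ty σ.D) → Finset Atom → Tm σ → Tm σ → Ty σ.D → Prop where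
  | var (Γ : List (Ty σ.D)) (n : ℕ) (τ : Ty σ.D) :
      Γ[n]? = some τ → CompRef σ R Γ w (Tm.var n) (Tm.var n) τ
  | unit : CompRef σ R Γ w Tm.unit Tm.unit Ty.unit
  | pair : IsVal v₁ → IsVal v₂ → IsVal v₁' → IsVal v₂' →
      R Γ w v₁ v₁' τ₁ → R Γ w v₂ v₂' τ₂ →
      CompRef σ R Γ w (Tm.pair v₁ v₂) (Tm.pair v₁' v₂') (Ty.prod τ₁ τ₂)
  | fn : R (τ :: Ty.arrow τ τ' :: Γ) w e e' τ' →
      CompRef σ R Γ w (Tm.fn e) (Tm.fn e') (Ty.arrow τ τ')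
  | con : IsVal v → IsVal v' → R Γ w v v' (σ.argTy c) →
      CompRef σ R Γ w (Tm.con c v) (Tm.con c v') (Ty.data (σ.resTy c))
  | atom : a ∈ w → CompRef σ R Γ w (Tm.atom a) (Tm.atom a) Ty.atm
  | bindv : IsVal v₁ → IsVal v₂ → IsVal v₁' → IsVal v₂' →
      R Γ w v₁ v₁' Ty.atm → R Γ w v₂ v₂' τ →
      CompRef σ R Γ w (Tm.bindv v₁ v₂) (Tm.bindv v₁' v₂') (Ty.bnd τ)
  | lett : R Γ w e₁ e₁' τ → R (τ :: Γ) w e₂ e₂' τ' →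
      CompRef σ R Γ w (Tm.lett e₁ e₂) (Tm.lett e₁' e₂') τ'
  | fst : IsVal v → IsVal v' → R Γ w v v' (Ty.prod τ₁ τ₂) →
      CompRef σ R Γ w (Tm.fst v) (Tm.fst v') τ₁
  | snd : IsVal v → IsVal v' → R Γ w v v' (Ty.prod τ₁ τ₂) →
      CompRef σ R Γ w (Tm.snd v) (Tm.snd v') τ₂
  | app : IsVal v₁ → IsVal v₂ → IsVal v₁' → IsVal v₂' →
      R Γ w v₁ v₁' (Ty.arrow τ τ') → R Γ w v₂ v₂' τ →
      CompRef σ R Γ w (Tm.app v₁ v₂) (Tm.app v₁' v₂') τ'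
  | case (br br' : σ.C → Tm σ) : IsVal v → IsVal v' → R Γ w v v' (Ty.data δ) →
      (∀ c, σ.resTy c = δ → R (σ.argTy c :: Γ) w (br c) (br' c) τ) →
      CompRef σ R Γ w (Tm.case v br) (Tm.case v' br') τ
  | fresh : CompRef σ R Γ w Tm.fresh Tm.fresh Ty.atm
  | unbind : IsVal v → IsVal v' → R Γ w v v' (Ty.bnd τ) →
      CompRef σ R Γ w (Tm.unbind v) (Tm.unbind v') (Ty.prod Ty.atm τ)
  | obs (o : σ.O) (args args' : Fin (σ.arity o) → Tm σ) :
      (∀ i, IsVal (args i)) → (∀ i, IsVal (args' i)) →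
      (∀ i, R Γ w (args i) (args' i) Ty.atm) →
      CompRef σ R Γ w (Tm.obs o args) (Tm.obs o args') (Ty.data σ.natD)

/-- Compatible refinement extended to frame stacks. -/
inductive StkRef (σ : Sig) (R : ExprRel σ) :
    List (Ty σ.D) → Finset Atom → Stk σ → Stk σ → Ty σ.D → Ty σ.D → Prop where
  | id : StkRef σ R Γ w Stk.id Stk.id τ τ
  | cons : R (τ :: Γ) w e e' τ' → StkRef σ R Γ w S S' τ' τ'' →
      StkRef σ R Γ w (Stk.cons S e) (Stk.cons S' e') τ τ''

/-! ## Properties of expression relations -/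

def RelRefl (σ : Sig) (R : ExprRel σ) : Prop :=
  ∀ Γ w (e : Tm σ) τ, e.atoms ⊆ w → HasTy σ Γ e τ → R Γ w e e τ

def RelSymm (σ : Sig) (R : ExprRel σ) : Prop :=
  ∀ Γ w e e' τ, R Γ w e e' τ → R Γ w e' e τ

def RelTrans (σ : Sig) (R : ExprRel σ) : Prop :=
  ∀ Γ w e e' e'' τ, R Γ w e e' τ → R Γ w e' e'' τ → R Γ w e e'' τ

def RelCompat (σ : Sig) (R : ExprRel σ) : Prop :=
  ∀ Γ w e e' τ, CompRef σ R Γ w e e' τ → R Γ w e e' τ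

def RelSubst (σ : Sig) (R : ExprRel σ) : Prop :=
  ∀ Γ w (v v' : Tm σ) τ e e' τ', IsVal v → IsVal v' →
    R Γ w v v' τ → R (τ :: Γ) w e e' τ' →
    R Γ w (e.subst1 v) (e'.subst1 v') τ'

def RelEquivariant (σ : Sig) (R : ExprRel σ) : Prop :=
  ∀ (π : Equiv.Perm Atom), {a : Atom | π a ≠ a}.Finite →
    ∀ Γ w (e e' : Tm σ) τ, R Γ w e e' τ →
      R Γ (w.image ⇑π) (e.mapAtoms ⇑π) (e'.mapAtoms ⇑π) τ

def RelAdequate (σ : Sig) (R : ExprRel σ) : Prop :=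
  ∀ w e e' τ, R [] w e e' τ → OpEq σ w e e' τ

/-! ## The Howe relation (least relation closed under the Howe rule) -/

def Howe (σ : Sig) : ExprRel σ := fun Γ w e e'' τ =>
  ∀ R : ExprRel σ,
    (∀ Γ' w' a c τ',
      (∃ b, CompRef σ R Γ' w' a b τ' ∧ CtxEq σ Γ' w' b c τ') → R Γ' w' a c τ') →
    R Γ w e e'' τ

/-! ## Nominal arities and α-equivalence -/

inductive NominalArity (σ : Sig) : Ty σ.D → Prop where
  | unit : NominalArity σ Ty.unit
  | prod : NominalArity σ t₁ → NominalArity σ t₂ → NominalArity σ (Ty.prod t₁ t₂)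
  | data (d : σ.D) : NominalArity σ (Ty.data d)
  | atm : NominalArity σ Ty.atm
  | bnd : NominalArity σ t → NominalArity σ (Ty.bnd t)

inductive AlphaEq (σ : Sig) : Finset Atom → Tm σ → Tm σ → Ty σ.D → Prop where
  | unit : AlphaEq σ w Tm.unit Tm.unit Ty.unit
  | pair : AlphaEq σ w v₁ v₁' a₁ → AlphaEq σ w v₂ v₂' a₂ →
      AlphaEq σ w (Tm.pair v₁ v₂) (Tm.pair v₁' v₂') (Ty.prod a₁ a₂)
  | con : AlphaEq σ w v v' (σ.argTy c) →
      AlphaEq σ w (Tm.con c v) (Tm.con c v') (Ty.data (σ.resTy c))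
  | atom : a ∈ w → AlphaEq σ w (Tm.atom a) (Tm.atom a) Ty.atm
  | bindv (a a' a'' : Atom) (v v' : Tm σ) : a'' ∉ w →
      insert a (insert a' (v.atoms ∪ v'.atoms)) ⊆ w →
      AlphaEq σ (insert a'' w) (v.renameAtom a a'') (v'.renameAtom a' a'') ar →
      AlphaEq σ w (Tm.bindv (Tm.atom a) v) (Tm.bindv (Tm.atom a') v') (Ty.bnd ar)

/-! ## Well-typed configurations -/

def ConfigTy (σ : Sig) (w : Finset Atom) (c : Config σ) (τ : Ty σ.D) : Prop :=
  c.st.Nodup ∧ c.stk.atoms ∪ c.tm.atoms ⊆ c.st.toFinset ∧ c.st.toFinset = w ∧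
  ∃ τ', HasTyStk σ [] c.stk τ' τ ∧ HasTy σ [] c.tm τ'

/-! ## Auxiliary lemmas for equivariance -/

namespace Tm

variable {σ : Sig}

lemma isVal_mapAtoms {v : Tm σ} (h : IsVal v) (f : Atom → Atom) :
    IsVal (v.mapAtoms f) := by
  induction h <;> simp only [mapAtoms] <;> constructor <;> assumption

lemma mapAtoms_renV (t : Tm σ) (r : ℕ → ℕ) (f : Atom → Atom) :
    (t.renV r).mapAtoms f = (t.mapAtoms f).renV r := by
  induction t generalizing r <;> simp_all [renV, mapAtoms]

lemma mapAtoms_ups (ρ : ℕ → Tm σ) (f : Atom → Atom) :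
    (fun n => (ups ρ n).mapAtoms f) = ups (fun n => (ρ n).mapAtoms f) := by
  funext n
  cases n with
  | zero => rfl
  | succ n => simp [ups, mapAtoms_renV]

lemma mapAtoms_subst (t : Tm σ) (ρ : ℕ → Tm σ) (f : Atom → Atom) :
    (t.subst ρ).mapAtoms f = (t.mapAtoms f).subst (fun n => (ρ n).mapAtoms f) := by
  induction t generalizing ρ <;> simp_all [subst, mapAtoms, mapAtoms_ups]

lemma mapAtoms_subst1 (e v : Tm σ) (f : Atom → Atom) :
    (e.subst1 v).mapAtoms f = (e.mapAtoms f).subst1 (v.mapAtoms f) := by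
  rw [subst1, subst1, mapAtoms_subst]
  congr 1
  funext n
  cases n <;> rfl

lemma mapAtoms_subst2 (e v w : Tm σ) (f : Atom → Atom) :
    (e.subst2 v w).mapAtoms f = (e.mapAtoms f).subst2 (v.mapAtoms f) (w.mapAtoms f) := by
  rw [subst2, subst2, mapAtoms_subst]
  congr 1
  funext n
  match n with
  | 0 => rfl
  | 1 => rfl
  | n + 2 => rfl

lemma mapAtoms_comp (t : Tm σ) (f g : Atom → Atom) :
    (t.mapAtoms f).mapAtoms g = t.mapAtoms (g ∘ f) := by
  induction t <;> simp_all [mapAtoms]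

lemma mapAtoms_congr {f g : Atom → Atom} (t : Tm σ)
    (h : ∀ a ∈ t.atoms, f a = g a) : t.mapAtoms f = t.mapAtoms g := by
  induction t <;> simp_all [mapAtoms, atoms] <;>
    first
    | rfl
    | (constructor <;> aesop)
    | aesop

lemma mapAtoms_id (t : Tm σ) : t.mapAtoms id = t := by
  induction t <;> simp_all [mapAtoms]

lemma mapAtoms_fix {f : Atom → Atom} (t : Tm σ)
    (h : ∀ a ∈ t.atoms, f a = a) : t.mapAtoms f = t := by
  rw [mapAtoms_congr t (g := id) h, mapAtoms_id]

end Tm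

namespace Stk

variable {σ : Sig}

lemma mapAtoms_fix {f : Atom → Atom} (S : Stk σ)
    (h : ∀ a ∈ S.atoms, f a = a) : S.mapAtoms f = S := by
  induction S with
  | id => rfl
  | cons S e ih =>
    simp only [atoms, Finset.mem_union] at h
    simp only [mapAtoms]
    rw [ih (fun a ha => h a (Or.inl ha)), Tm.mapAtoms_fix e (fun a ha => h a (Or.inr ha))]

end Stk

lemma mapAtoms_numeral (σ : Sig) (m : ℕ) (f : Atom → Atom) :
    (numeral σ m).mapAtoms f = numeral σ m := by
  induction m <;> simp_all [numeral, Tm.mapAtoms]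

lemma nodup_step {σ : Sig} {c c' : Config σ} (h : Step σ c c') (hn : c.st.Nodup) :
    c'.st.Nodup := by
  cases h <;> simp_all [List.nodup_append] <;> exact fun a ha h => by subst h; contradiction

/-- Equivariance of termination. -/
lemma termN_equiv {σ : Sig} (hequiv : ObsEquivariant σ) (π : Equiv.Perm Atom)
    (hfin : {a : Atom | π a ≠ a}.Finite) :
    ∀ {c : Config σ} {n : ℕ}, TermN σ c n → c.st.Nodup →
      TermN σ ⟨c.st.map ⇑π, c.stk.mapAtoms ⇑π, c.tm.mapAtoms ⇑π⟩ n := by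
  intro c n h
  induction h with
  | val hv => intro _; exact TermN.val (Tm.isVal_mapAtoms hv _)
  | step hstep _ ih =>
    intro hn
    have hn' := nodup_step hstep hn
    refine TermN.step ?_ (ih hn')
    cases hstep with
    | pop hv =>
      rw [show (Tm.subst1 _ _).mapAtoms ⇑π = _ from Tm.mapAtoms_subst1 ..]
      exact Step.pop (Tm.isVal_mapAtoms hv _)
    | lett => exact Step.lett
    | case br hv =>
      rw [show (Tm.subst1 _ _).mapAtoms ⇑π = _ from Tm.mapAtoms_subst1 ..]
      exact Step.case _ (Tm.isVal_mapAtoms hv _)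
    | fst hv₁ hv₂ => exact Step.fst (Tm.isVal_mapAtoms hv₁ _) (Tm.isVal_mapAtoms hv₂ _)
    | snd hv₁ hv₂ => exact Step.snd (Tm.isVal_mapAtoms hv₁ _) (Tm.isVal_mapAtoms hv₂ _)
    | app hv =>
      rw [show (Tm.subst2 _ _ _).mapAtoms ⇑π = _ from Tm.mapAtoms_subst2 ..]
      exact Step.app (Tm.isVal_mapAtoms hv _)
    | @fresh s a' S ha' =>
      have : (s ++ [a']).map ⇑π = s.map ⇑π ++ [π a'] := by simp
      rw [show (⟨(s ++ [a']).map ⇑π, _, _⟩ : Config σ) = ⟨s.map ⇑π ++ [π a'], _, _⟩ from by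
        rw [this]]
      exact Step.fresh (by
        intro hmem
        obtain ⟨b, hb, hb'⟩ := List.mem_map.mp hmem
        exact ha' (π.injective hb' ▸ hb))
    | @unbind s a' v S a ha' hv =>
      have hmap : (s ++ [a']).map ⇑π = s.map ⇑π ++ [π a'] := by simp
      have hren : (v.renameAtom a a').mapAtoms ⇑π
          = (v.mapAtoms ⇑π).renameAtom (π a) (π a') := by
        rw [Tm.renameAtom, Tm.renameAtom, Tm.mapAtoms_comp, Tm.mapAtoms_comp]
        congr 1
        funext b
        simp only [Function.comp]
        by_cases hb : b = a
        · simp [hb]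
        · simp [hb, fun h => hb (π.injective h)]
      rw [show (⟨(s ++ [a']).map ⇑π, S.mapAtoms ⇑π,
            (Tm.pair (Tm.atom a') (v.renameAtom a a')).mapAtoms ⇑π⟩ : Config σ)
          = ⟨s.map ⇑π ++ [π a'], S.mapAtoms ⇑π,
            Tm.pair (Tm.atom (π a')) ((v.mapAtoms ⇑π).renameAtom (π a) (π a'))⟩ from by
        rw [hmap]; simp only [Tm.mapAtoms, hren]]
      exact Step.unbind (by
        intro hmem
        obtain ⟨b, hb, hb'⟩ := List.mem_map.mp hmem
        exact ha' (π.injective hb' ▸ hb)) (Tm.isVal_mapAtoms hv _)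
    | @obs s S o as hmem =>
      have h1 : (Tm.obs o (fun i => Tm.atom (as i))).mapAtoms ⇑π
          = Tm.obs o (fun i => Tm.atom (π (as i))) := rfl
      have h2 : (numeral σ (σ.obsVal o s (List.ofFn as))).mapAtoms ⇑π
          = numeral σ (σ.obsVal o (s.map ⇑π) (List.ofFn (fun i => π (as i)))) := by
        rw [mapAtoms_numeral]
        congr 1
        have := hequiv π hfin o s (List.ofFn as) hn (by simp)
          (by intro b hb; obtain ⟨i, rfl⟩ := List.mem_ofFn.mp hb; exact hmem i)
        rw [this]
        congr 1
        rw [List.map_ofFn]; rfl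
      rw [h1, h2]
      exact Step.obs o (fun i => π (as i)) (fun i => List.mem_map.mpr ⟨as i, hmem i, rfl⟩)

/-- Some/any property of fresh atoms. -/
theorem fresh_some_any (σ : Sig) (hequiv : ObsEquivariant σ) :
    (∀ (s : List Atom) (S : Stk σ) (n : ℕ), s.Nodup →
      S.atoms ⊆ s.toFinset →
      TermN σ ⟨s, S, Tm.fresh⟩ (n + 1) →
      ∀ a' : Atom, a' ∉ s → TermN σ ⟨s ++ [a'], S, Tm.atom a'⟩ n) ∧
    (∀ (s : List Atom) (S : Stk σ) (a : Atom) (v : Tm σ) (n : ℕ), s.Nodup →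
      IsVal v → S.atoms ∪ insert a v.atoms ⊆ s.toFinset →
      TermN σ ⟨s, S, Tm.unbind (Tm.bindv (Tm.atom a) v)⟩ (n + 1) →
      ∀ a' : Atom, a' ∉ s →
        TermN σ ⟨s ++ [a'], S, Tm.pair (Tm.atom a') (v.renameAtom a a')⟩ n) := by
  -- generic swap machinery
  have swap_fin : ∀ a₀ a' : Atom, {x : Atom | Equiv.swap a₀ a' x ≠ x}.Finite := by
    intro a₀ a'
    apply Set.Finite.subset ((Set.finite_singleton a').insert a₀)
    intro x hx
    by_contra hmem
    simp only [Set.mem_insert_iff, Set.mem_singleton_iff, not_or] at hmem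
    exact hx (Equiv.swap_apply_of_ne_of_ne hmem.1 hmem.2)
  have map_fix : ∀ (s : List Atom) (a₀ a' : Atom), a₀ ∉ s → a' ∉ s →
      s.map ⇑(Equiv.swap a₀ a') = s := by
    intro s a₀ a' h₀ h'
    rw [List.map_congr_left (g := id) ?_, List.map_id]
    intro x hx
    exact Equiv.swap_apply_of_ne_of_ne (fun h => h₀ (h ▸ hx)) (fun h => h' (h ▸ hx))
  constructor
  · intro s S n hnd hS hterm a' ha'
    cases hterm with
    | step hstep hrest =>
      cases hstep with
      | pop hv => cases hv
      | @fresh _ a₀ _ ha₀ =>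
        by_cases heq : a' = a₀
        · exact heq ▸ hrest
        · set π := Equiv.swap a₀ a' with hπ
          have := termN_equiv hequiv π (swap_fin a₀ a') hrest
            (by simp [List.nodup_append, hnd, ha₀]; exact fun a ha h => ha₀ (h ▸ ha))
          simp only at this
          have hmap : (s ++ [a₀]).map ⇑π = s ++ [a'] := by
            rw [List.map_append, map_fix s a₀ a' ha₀ ha', List.map_singleton,
              Equiv.swap_apply_left]
          have hSfix : S.mapAtoms ⇑π = S := by
            apply Stk.mapAtoms_fix
            intro b hb
            have hbs : b ∈ s := List.mem_toFinset.mp (hS hb)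
            exact Equiv.swap_apply_of_ne_of_ne (fun h => ha₀ (h ▸ hbs))
              (fun h => ha' (h ▸ hbs))
          have htm : (Tm.atom a₀ : Tm σ).mapAtoms ⇑π = Tm.atom a' := by
            simp [Tm.mapAtoms, hπ]
          rw [hmap, hSfix, htm] at this
          exact this
  · intro s S a v n hnd hv hsub hterm a' ha'
    cases hterm with
    | step hstep hrest =>
      cases hstep with
      | pop hval => cases hval
      | @unbind _ a₀ _ _ _ ha₀ _ =>
        by_cases heq : a' = a₀
        · exact heq ▸ hrest
        · set π := Equiv.swap a₀ a' with hπ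
          have key := termN_equiv hequiv π (swap_fin a₀ a') hrest
            (by simp [List.nodup_append, hnd, ha₀]; exact fun a ha h => ha₀ (h ▸ ha))
          simp only at key
          have hmap : (s ++ [a₀]).map ⇑π = s ++ [a'] := by
            rw [List.map_append, map_fix s a₀ a' ha₀ ha', List.map_singleton,
              Equiv.swap_apply_left]
          have hSfix : S.mapAtoms ⇑π = S := by
            apply Stk.mapAtoms_fix
            intro b hb
            have hbs : b ∈ s := List.mem_toFinset.mp (hsub (Finset.mem_union_left _ hb))
            exact Equiv.swap_apply_of_ne_of_ne (fun h => ha₀ (h ▸ hbs))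
              (fun h => ha' (h ▸ hbs))
          have hfix : ∀ b ∈ v.atoms, π b = b := by
            intro b hb
            have hbs : b ∈ s := List.mem_toFinset.mp
              (hsub (Finset.mem_union_right _ (Finset.mem_insert_of_mem hb)))
            exact Equiv.swap_apply_of_ne_of_ne (fun h => ha₀ (h ▸ hbs))
              (fun h => ha' (h ▸ hbs))
          have htm : (Tm.pair (Tm.atom a₀) (v.renameAtom a a₀)).mapAtoms ⇑π
              = Tm.pair (Tm.atom a') (v.renameAtom a a') := by
            simp only [Tm.mapAtoms]
            congr 1
            · simp [hπ]
            · rw [Tm.renameAtom, Tm.renameAtom, Tm.mapAtoms_comp]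
              apply Tm.mapAtoms_congr
              intro b hb
              simp only [Function.comp]
              by_cases hba : b = a
              · simp [hba, hπ, Equiv.swap_apply_left]
              · simp [hba, hfix b hb]
          rw [hmap, hSfix, htm] at key
          exact key
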